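/- Let V be a finite type and w : V → V → ℝ a symmetric function (w p q = w q p for all p, q) with nonnegative values (w p q ≥ 0 for all p, q). Let W be the V × V real matrix with entries W p q = w p q, let D be the diagonal matrix with diagonal entries D p p = Σ_{q ∈ V} w p q, and let L = D − W be the graph Laplacian. Let G be the support graph of w, i.e., the simple graph on V in which p and q are adjacent iff p ≠ q and w p q ≠ 0. Then the kernel of the linear map x ↦ L.mulVec x (the eigenspace of L for the eigenvalue 0) equals the linear span of the indicator vectors 1_A of the connected components A of G. -/

import Mathlib

open Finset Matrix Classical in
theorem laplacian_kernel_eq_span_indicators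
    {V : Type*} [Fintype V] [DecidableEq V]
    (w : V → V → ℝ) (hsymm : ∀ p q, w p q = w q p)
    (hnonneg : ∀ p q, 0 ≤ w p q)
    (W : Matrix V V ℝ) (hW : ∀ p q, W p q = w p q)
    (D : Matrix V V ℝ) (hD : D = Matrix.diagonal fun p => ∑ q, w p q)
    (L : Matrix V V ℝ) (hL : L = D - W)
    (G : SimpleGraph V) (hG : ∀ p q, G.Adj p q ↔ p ≠ q ∧ w p q ≠ 0) :
    LinearMap.ker L.mulVecLin =
      Submodule.span ℝ
        (Set.range fun A : G.ConnectedComponent =>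
          fun p => if G.connectedComponentMk p = A then (1 : ℝ) else 0) := by
  have hFin : Fintype G.ConnectedComponent := Fintype.ofFinite _
  have hmul : ∀ (x : V → ℝ) p, L.mulVec x p = ∑ q, w p q * (x p - x q) := by
    intro x p
    simp only [Matrix.mulVec, dotProduct, hL, Matrix.sub_apply, hD,
      Matrix.diagonal_apply, hW, sub_mul, mul_sub]
    rw [Finset.sum_sub_distrib, Finset.sum_sub_distrib]
    congr 1
    simp [ite_mul, Finset.sum_mul]
  apply le_antisymm
  · -- ker ⊆ span
    intro x hx
    have hx0 : L.mulVec x = 0 := hx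
    -- quadratic form is zero
    have hsum0 : ∑ p, ∑ q, w p q * (x p - x q) ^ 2 = 0 := by
      have h1 : ∑ p, ∑ q, w p q * (x p - x q) * x p = 0 := by
        have : ∀ p, ∑ q, w p q * (x p - x q) * x p = L.mulVec x p * x p := by
          intro p; rw [hmul, Finset.sum_mul]
        rw [Finset.sum_congr rfl fun p _ => this p]
        simp [hx0]
      have h2 : ∑ p, ∑ q, w p q * (x p - x q) * x q
          = - ∑ p, ∑ q, w p q * (x p - x q) * x p := by
        rw [Finset.sum_comm, ← Finset.sum_neg_distrib]
        refine Finset.sum_congr rfl fun q _ => ?_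
        rw [← Finset.sum_neg_distrib]
        refine Finset.sum_congr rfl fun p _ => ?_
        rw [hsymm p q]; ring
      calc ∑ p, ∑ q, w p q * (x p - x q) ^ 2
          = ∑ p, ∑ q, (w p q * (x p - x q) * x p - w p q * (x p - x q) * x q) := by
            refine Finset.sum_congr rfl fun p _ => Finset.sum_congr rfl fun q _ => by ring
        _ = (∑ p, ∑ q, w p q * (x p - x q) * x p)
            - ∑ p, ∑ q, w p q * (x p - x q) * x q := by
            rw [← Finset.sum_sub_distrib]
            exact Finset.sum_congr rfl fun p _ => Finset.sum_sub_distrib _ _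
        _ = 0 := by rw [h1, h2, h1]; ring
    have hterm : ∀ p q, w p q * (x p - x q) ^ 2 = 0 := by
      have h := (Finset.sum_eq_zero_iff_of_nonneg (fun p _ =>
        Finset.sum_nonneg fun q _ => mul_nonneg (hnonneg p q) (sq_nonneg _))).mp hsum0
      intro p q
      have h2 := (Finset.sum_eq_zero_iff_of_nonneg (fun q _ =>
        mul_nonneg (hnonneg p q) (sq_nonneg _))).mp (h p (Finset.mem_univ p))
      exact h2 q (Finset.mem_univ q)
    have hadj : ∀ p q, G.Adj p q → x p = x q := by
      intro p q hpq
      rcases (hG p q).mp hpq with ⟨_, hw⟩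
      have := hterm p q
      rcases mul_eq_zero.mp this with h | h
      · exact absurd h hw
      · have := pow_eq_zero_iff (n := 2) (by norm_num) |>.mp h
        linarith [sub_eq_zero.mp this]
    have hwalk : ∀ (u v : V) (W : G.Walk u v), x u = x v := by
      intro u v Wk
      induction Wk with
      | nil => rfl
      | cons h _ ih => rw [hadj _ _ h]; exact ih
    have hcomp : ∀ p q : V, G.connectedComponentMk p = G.connectedComponentMk q →
        x p = x q := by
      intro p q h
      rcases (SimpleGraph.ConnectedComponent.eq.mp h) with ⟨Wk⟩
      exact hwalk p q Wk
    set f : G.ConnectedComponent → ℝ :=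
      SimpleGraph.ConnectedComponent.lift x (fun u v Wk _ => hwalk u v Wk) with hf
    have hxf : x = ∑ A : G.ConnectedComponent,
        f A • (fun p => if G.connectedComponentMk p = A then (1 : ℝ) else 0) := by
      funext p
      rw [Finset.sum_apply]
      simp only [Pi.smul_apply, smul_eq_mul, mul_ite, mul_one, mul_zero]
      rw [Finset.sum_ite_eq Finset.univ (G.connectedComponentMk p) f]
      simp [hf]
    rw [hxf]
    exact Submodule.sum_mem _ fun A _ =>
      Submodule.smul_mem _ _ (Submodule.subset_span ⟨A, rfl⟩)
  · -- span ⊆ ker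
    rw [Submodule.span_le]
    rintro _ ⟨A, rfl⟩
    simp only [SetLike.mem_coe, LinearMap.mem_ker, Matrix.mulVecLin_apply]
    funext p
    rw [hmul]
    refine Finset.sum_eq_zero fun q _ => ?_
    by_cases hw : w p q = 0
    · simp [hw]
    by_cases hpq : p = q
    · subst hpq; simp
    have hadj : G.Adj p q := (hG p q).mpr ⟨hpq, hw⟩
    have : G.connectedComponentMk p = G.connectedComponentMk q :=
      SimpleGraph.ConnectedComponent.sound hadj.reachable
    rw [this]
    simp
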